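/- Supermartingale inequality for group interaction (one step, n individuals): In the finite group-interaction model on a graph E over [n], define Z_g(t) = Σ_{i,j ∈ [n]} ( (‖x_i(t) − x_j(t)‖² ∧ ε²) ∨ ε²·1{(i,j) ∉ E} ), i.e. the summand is min(‖x_i(t) − x_j(t)‖², ε²) when (i,j) ∈ E and ε² when (i,j) ∉ E. Then for every t, Z_g(t) − Z_g(t+1) ≥ 4 Σ_{i ∈ [n]} ‖x_i(t) − x_i(t+1)‖². -/

import Mathlib

open scoped Classical

/-- The update neighborhood under group interaction on a simple graph `G` over `[n]`:
`N_i(t) = {j : j = i, or (i,j) ∈ E and ‖x_i(t) − x_j(t)‖ ≤ ε}`. -/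
noncomputable def grpNbhd {n d : ℕ} (G : SimpleGraph (Fin n)) (ε : ℝ)
    (x : ℕ → Fin n → EuclideanSpace ℝ (Fin d)) (t : ℕ) (i : Fin n) : Finset (Fin n) :=
  Finset.univ.filter fun j => j = i ∨ (G.Adj i j ∧ ‖x t i - x t j‖ ≤ ε)

open scoped RealInnerProductSpace


lemma grp_swap {n : ℕ} (N : Fin n → Finset (Fin n))
    (hsymm : ∀ i j, j ∈ N i ↔ i ∈ N j) (f : Fin n → Fin n → ℝ) :
    ∑ i, ∑ j ∈ N i, f i j = ∑ i, ∑ j ∈ N i, f j i :=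
  Finset.sum_comm' (fun a b => by simp [hsymm a b])

lemma grp_core {n d : ℕ} (N : Fin n → Finset (Fin n))
    (hmem : ∀ i, i ∈ N i) (hsymm : ∀ i j, j ∈ N i ↔ i ∈ N j)
    (xo xn : Fin n → EuclideanSpace ℝ (Fin d)) (c : Fin n → ℝ)
    (hc0 : ∀ i, 0 ≤ c i) (hc1 : ∀ i, ((N i).card : ℝ) * c i ≤ 1)
    (hupd : ∀ i, xn i = xo i + c i • ∑ k ∈ N i, (xo k - xo i)) :
    4 * ∑ i, ‖xo i - xn i‖ ^ 2 ≤
      ∑ i, ∑ j ∈ N i, (‖xo i - xo j‖ ^ 2 - ‖xn i - xn j‖ ^ 2) := by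
  classical
  set s : Fin n → EuclideanSpace ℝ (Fin d) := fun i => ∑ k ∈ N i, (xo k - xo i) with hs
  set D : Fin n → EuclideanSpace ℝ (Fin d) := fun i => c i • s i with hD
  have hxn : ∀ i, xn i = xo i + D i := fun i => hupd i
  have hDnorm : ∀ i, ‖D i‖ ^ 2 = c i ^ 2 * ‖s i‖ ^ 2 := by
    intro i
    show ‖c i • s i‖ ^ 2 = _
    rw [norm_smul, Real.norm_eq_abs, abs_of_nonneg (hc0 i), mul_pow]
  have hcard1 : ∀ i, (1 : ℝ) ≤ ((N i).card : ℝ) := by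
    intro i
    exact_mod_cast Finset.card_pos.2 ⟨i, hmem i⟩
  -- pointwise expansion
  have hg : ∀ i j, ‖xo i - xo j‖ ^ 2 - ‖xn i - xn j‖ ^ 2
      = -(2 * ⟪xo i - xo j, D i - D j⟫) - ‖D i - D j‖ ^ 2 := by
    intro i j
    have h1 : xn i - xn j = (xo i - xo j) + (D i - D j) := by
      rw [hxn i, hxn j]; abel
    rw [h1, norm_add_sq_real]; ring
  -- sum of xo i - xo j over j ∈ N i equals -(s i)
  have hsum_u : ∀ i, ∑ j ∈ N i, (xo i - xo j) = -(s i) := by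
    intro i
    show _ = -(∑ k ∈ N i, (xo k - xo i))
    rw [← Finset.sum_neg_distrib]
    exact Finset.sum_congr rfl fun j _ => (neg_sub _ _).symm
  have hinner : ∀ i, ∑ j ∈ N i, ⟪xo i - xo j, D i⟫ = -(c i * ‖s i‖ ^ 2) := by
    intro i
    rw [← sum_inner, hsum_u i]
    show ⟪-(s i), c i • s i⟫ = _
    rw [inner_neg_left, real_inner_smul_right, real_inner_self_eq_norm_sq]
  -- the inner-product double sum
  have hP : ∑ i, ∑ j ∈ N i, ⟪xo i - xo j, D i - D j⟫
      = -(2 * ∑ i, c i * ‖s i‖ ^ 2) := by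
    have e1 : ∑ i, ∑ j ∈ N i, ⟪xo i - xo j, D i - D j⟫
        = (∑ i, ∑ j ∈ N i, ⟪xo i - xo j, D i⟫)
          - ∑ i, ∑ j ∈ N i, ⟪xo i - xo j, D j⟫ := by
      rw [← Finset.sum_sub_distrib]
      refine Finset.sum_congr rfl fun i _ => ?_
      rw [← Finset.sum_sub_distrib]
      exact Finset.sum_congr rfl fun j _ => inner_sub_right _ _ _
    have e2 : ∑ i, ∑ j ∈ N i, ⟪xo i - xo j, D j⟫
        = -∑ i, ∑ j ∈ N i, ⟪xo i - xo j, D i⟫ := by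
      rw [grp_swap N hsymm (fun i j => ⟪xo i - xo j, D j⟫)]
      rw [← Finset.sum_neg_distrib]
      refine Finset.sum_congr rfl fun i _ => ?_
      rw [← Finset.sum_neg_distrib]
      refine Finset.sum_congr rfl fun j _ => ?_
      rw [← inner_neg_left, neg_sub]
    rw [e1, e2, sub_neg_eq_add]
    have e3 : ∀ i, ∑ j ∈ N i, ⟪xo i - xo j, D i⟫ = -(c i * ‖s i‖ ^ 2) := hinner
    simp_rw [e3]
    rw [Finset.sum_neg_distrib]
    ring
  -- the double sum equals 4S - B
  have hT : ∑ i, ∑ j ∈ N i, (‖xo i - xo j‖ ^ 2 - ‖xn i - xn j‖ ^ 2)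
      = 4 * (∑ i, c i * ‖s i‖ ^ 2) - ∑ i, ∑ j ∈ N i, ‖D i - D j‖ ^ 2 := by
    simp_rw [hg]
    rw [show (∑ i, ∑ j ∈ N i, (-(2 * ⟪xo i - xo j, D i - D j⟫) - ‖D i - D j‖ ^ 2))
        = (∑ i, ∑ j ∈ N i, -(2 * ⟪xo i - xo j, D i - D j⟫))
          - ∑ i, ∑ j ∈ N i, ‖D i - D j‖ ^ 2 from by
      rw [← Finset.sum_sub_distrib]
      exact Finset.sum_congr rfl fun i _ => by rw [← Finset.sum_sub_distrib]]
    have : ∑ i, ∑ j ∈ N i, -(2 * ⟪xo i - xo j, D i - D j⟫)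
        = -(2 * ∑ i, ∑ j ∈ N i, ⟪xo i - xo j, D i - D j⟫) := by
      simp [Finset.sum_neg_distrib, Finset.mul_sum]
    rw [this, hP]
    ring
  -- bound B
  have hNe : ∀ i j, (j ∈ (N i).erase i ↔ i ∈ (N j).erase j) := fun i j => by
    simp only [Finset.mem_erase]
    exact and_congr ne_comm (hsymm i j)
  have hB : ∑ i, ∑ j ∈ N i, ‖D i - D j‖ ^ 2
      ≤ 4 * ∑ i, (((N i).card : ℝ) - 1) * ‖D i‖ ^ 2 := by
    have h0 : ∀ i, ∑ j ∈ N i, ‖D i - D j‖ ^ 2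
        = ∑ j ∈ (N i).erase i, ‖D i - D j‖ ^ 2 := by
      intro i
      rw [← Finset.sum_erase_add (N i) _ (hmem i)]
      simp
    have hcarde : ∀ i, (((N i).erase i).card : ℝ) = ((N i).card : ℝ) - 1 := by
      intro i
      rw [Finset.card_erase_of_mem (hmem i)]
      have h1 : 1 ≤ (N i).card := Finset.card_pos.2 ⟨i, hmem i⟩
      push_cast [Nat.cast_sub h1]
      ring
    calc ∑ i, ∑ j ∈ N i, ‖D i - D j‖ ^ 2
        = ∑ i, ∑ j ∈ (N i).erase i, ‖D i - D j‖ ^ 2 := by simp_rw [h0]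
      _ ≤ ∑ i, ∑ j ∈ (N i).erase i, (2 * ‖D i‖ ^ 2 + 2 * ‖D j‖ ^ 2) := by
          refine Finset.sum_le_sum fun i _ => Finset.sum_le_sum fun j _ => ?_
          have h1 := abs_real_inner_le_norm (D i) (D j)
          have h2 := norm_sub_sq_real (D i) (D j)
          have h3 := abs_le.1 h1
          nlinarith [sq_nonneg (‖D i‖ - ‖D j‖)]
      _ = ∑ i, ((((N i).card : ℝ) - 1) * (2 * ‖D i‖ ^ 2))
            + ∑ i, ∑ j ∈ (N i).erase i, 2 * ‖D j‖ ^ 2 := by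
          rw [← Finset.sum_add_distrib]
          refine Finset.sum_congr rfl fun i _ => ?_
          rw [Finset.sum_add_distrib, Finset.sum_const, nsmul_eq_mul, hcarde i]
      _ = ∑ i, ((((N i).card : ℝ) - 1) * (2 * ‖D i‖ ^ 2))
            + ∑ i, ((((N i).card : ℝ) - 1) * (2 * ‖D i‖ ^ 2)) := by
          congr 1
          rw [Finset.sum_comm' (s := Finset.univ) (t := fun i => (N i).erase i)
            (s' := fun j => (N j).erase j) (t' := Finset.univ)
            (fun a b => by simp [hNe a b]) (f := fun i j => 2 * ‖D j‖ ^ 2)]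
          refine Finset.sum_congr rfl fun i _ => ?_
          rw [Finset.sum_const, nsmul_eq_mul, hcarde i]
      _ = 4 * ∑ i, (((N i).card : ℝ) - 1) * ‖D i‖ ^ 2 := by
          rw [Finset.mul_sum, ← Finset.sum_add_distrib]
          exact Finset.sum_congr rfl fun i _ => by ring
  -- per-i scalar bound
  have hper : ∀ i, (((N i).card : ℝ) - 1) * ‖D i‖ ^ 2 ≤ (c i - c i ^ 2) * ‖s i‖ ^ 2 := by
    intro i
    rw [hDnorm i]
    have h1 : 0 ≤ c i * (1 - ((N i).card : ℝ) * c i) * ‖s i‖ ^ 2 :=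
      mul_nonneg (mul_nonneg (hc0 i) (by linarith [hc1 i])) (sq_nonneg _)
    nlinarith [h1]
  have hBB : ∑ i, (((N i).card : ℝ) - 1) * ‖D i‖ ^ 2 ≤ ∑ i, (c i - c i ^ 2) * ‖s i‖ ^ 2 :=
    Finset.sum_le_sum fun i _ => hper i
  have hDxo : ∀ i, ‖xo i - xn i‖ ^ 2 = c i ^ 2 * ‖s i‖ ^ 2 := by
    intro i
    have h : xo i - xn i = -D i := by rw [hxn i]; abel
    rw [h, norm_neg, hDnorm i]
  have hfin : ∑ i, ‖xo i - xn i‖ ^ 2 = ∑ i, c i ^ 2 * ‖s i‖ ^ 2 :=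
    Finset.sum_congr rfl fun i _ => hDxo i
  have hsplit : ∑ i, c i * ‖s i‖ ^ 2 - ∑ i, (c i - c i ^ 2) * ‖s i‖ ^ 2
      = ∑ i, c i ^ 2 * ‖s i‖ ^ 2 := by
    rw [← Finset.sum_sub_distrib]
    exact Finset.sum_congr rfl fun i _ => by ring
  rw [hT, hfin]
  linarith

/-- **Supermartingale inequality for group interaction (one step, `n` individuals).**
In the finite group-interaction model on a graph `E` over `[n]`, the quantity
`Z_g(t) = Σ_{i,j} ((‖x_i(t) − x_j(t)‖² ∧ ε²) ∨ ε²·1{(i,j) ∉ E})` satisfies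
`Z_g(t) − Z_g(t+1) ≥ 4 Σ_i ‖x_i(t) − x_i(t+1)‖²` for every `t`. -/
theorem group_interaction_supermartingale (n d : ℕ) (hn : 1 ≤ n) (hd : 1 ≤ d)
    (ε : ℝ) (hε : 0 < ε)
    (G : SimpleGraph (Fin n))
    (x : ℕ → Fin n → EuclideanSpace ℝ (Fin d)) (α : ℕ → Fin n → ℝ)
    (hα : ∀ t i, α t i ∈ Set.Icc (0 : ℝ) 1)
    (hdyn : ∀ t i, x (t + 1) i =
      α t i • x t i + ((1 - α t i) / ((grpNbhd G ε x t i).card : ℝ)) •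
        ∑ k ∈ grpNbhd G ε x t i, x t k) :
    ∀ t : ℕ,
      (∑ i, ∑ j, (min (‖x t i - x t j‖ ^ 2) (ε ^ 2)) ⊔
          (if G.Adj i j then 0 else ε ^ 2)) -
        (∑ i, ∑ j, (min (‖x (t + 1) i - x (t + 1) j‖ ^ 2) (ε ^ 2)) ⊔
          (if G.Adj i j then 0 else ε ^ 2)) ≥
      4 * ∑ i, ‖x t i - x (t + 1) i‖ ^ 2 := by
  intro t
  classical
  set N : Fin n → Finset (Fin n) := fun i => grpNbhd G ε x t i with hN
  have hmemN : ∀ i j, (j ∈ N i ↔ (j = i ∨ (G.Adj i j ∧ ‖x t i - x t j‖ ≤ ε))) := by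
    intro i j
    simp [hN, grpNbhd]
  have hmem : ∀ i, i ∈ N i := fun i => (hmemN i i).2 (Or.inl rfl)
  have hsymm : ∀ i j, j ∈ N i ↔ i ∈ N j := by
    intro i j
    rw [hmemN, hmemN]
    constructor
    · rintro (h | ⟨hadj, hle⟩)
      · exact Or.inl h.symm
      · exact Or.inr ⟨hadj.symm, by rwa [norm_sub_rev]⟩
    · rintro (h | ⟨hadj, hle⟩)
      · exact Or.inl h.symm
      · exact Or.inr ⟨hadj.symm, by rwa [norm_sub_rev]⟩
  have hcard1 : ∀ i, 1 ≤ (N i).card := fun i => Finset.card_pos.2 ⟨i, hmem i⟩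
  have hcardne : ∀ i, ((N i).card : ℝ) ≠ 0 := fun i => by
    have := hcard1 i; positivity
  set c : Fin n → ℝ := fun i => (1 - α t i) / ((N i).card : ℝ) with hc
  have hc0 : ∀ i, 0 ≤ c i := by
    intro i
    have h1 := (hα t i).2
    have h2 : (0:ℝ) < ((N i).card : ℝ) := by
      have := hcard1 i; positivity
    exact div_nonneg (by linarith) h2.le
  have hc1 : ∀ i, ((N i).card : ℝ) * c i ≤ 1 := by
    intro i
    have h : ((N i).card : ℝ) * c i = 1 - α t i := by
      show ((N i).card : ℝ) * ((1 - α t i) / ((N i).card : ℝ)) = _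
      rw [mul_comm]
      exact div_mul_cancel₀ _ (hcardne i)
    rw [h]
    linarith [(hα t i).1]
  have hupd : ∀ i, x (t + 1) i = x t i + c i • ∑ k ∈ N i, (x t k - x t i) := by
    intro i
    have h2 := hdyn t i
    have h1 : ∑ k ∈ N i, x t k
        = (∑ k ∈ N i, (x t k - x t i)) + ((N i).card : ℝ) • x t i := by
      rw [Finset.sum_sub_distrib, Finset.sum_const, Nat.cast_smul_eq_nsmul,
        sub_add_cancel]
    rw [h1] at h2
    have h3 : ((1 - α t i) / ((N i).card : ℝ)) * ((N i).card : ℝ) = 1 - α t i :=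
      div_mul_cancel₀ _ (hcardne i)
    rw [h2, smul_add, smul_smul, h3]
    show α t i • x t i + (c i • _ + (1 - α t i) • x t i) = x t i + c i • _
    module
  -- core inequality
  have hcore := grp_core N hmem hsymm (x t) (x (t + 1)) c hc0 hc1 hupd
  -- per-pair reduction
  have hε2 : (0:ℝ) < ε ^ 2 := by positivity
  rw [ge_iff_le, ← Finset.sum_sub_distrib]
  refine le_trans ?_ (le_trans hcore ?_)
  · exact le_refl _
  refine Finset.sum_le_sum fun i _ => ?_
  rw [← Finset.sum_sub_distrib]
  have hrw : ∑ j ∈ N i, (‖x t i - x t j‖ ^ 2 - ‖x (t+1) i - x (t+1) j‖ ^ 2)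
      = ∑ j : Fin n, if j ∈ N i
          then ‖x t i - x t j‖ ^ 2 - ‖x (t+1) i - x (t+1) j‖ ^ 2 else 0 := by
    rw [Finset.sum_ite_mem, Finset.univ_inter]
  rw [hrw]
  refine Finset.sum_le_sum fun j _ => ?_
  by_cases hj : j ∈ N i
  · rw [if_pos hj]
    rcases (hmemN i j).1 hj with h | ⟨hadj, hle⟩
    · subst h
      simp [sub_self, min_eq_left hε2.le]
    · rw [if_pos hadj]
      have h1 : min (‖x t i - x t j‖ ^ 2) (ε ^ 2) = ‖x t i - x t j‖ ^ 2 :=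
        min_eq_left (by nlinarith [norm_nonneg (x t i - x t j)])
      have h2 : min (‖x t i - x t j‖ ^ 2) (ε ^ 2) ⊔ 0
          = ‖x t i - x t j‖ ^ 2 := by
        rw [h1]; exact max_eq_left (by positivity)
      have h3 : min (‖x (t+1) i - x (t+1) j‖ ^ 2) (ε ^ 2) ⊔ 0
          = min (‖x (t+1) i - x (t+1) j‖ ^ 2) (ε ^ 2) :=
        max_eq_left (le_min (by positivity) hε2.le)
      rw [h2, h3]
      have h4 : min (‖x (t+1) i - x (t+1) j‖ ^ 2) (ε ^ 2)
          ≤ ‖x (t+1) i - x (t+1) j‖ ^ 2 := min_le_left _ _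
      linarith
  · rw [if_neg hj, sub_nonneg]
    by_cases hadj : G.Adj i j
    · rw [if_pos hadj]
      have hgt : ¬ ‖x t i - x t j‖ ≤ ε := by
        intro hle
        exact hj ((hmemN i j).2 (Or.inr ⟨hadj, hle⟩))
      push_neg at hgt
      have h1 : min (‖x t i - x t j‖ ^ 2) (ε ^ 2) = ε ^ 2 :=
        min_eq_right (by nlinarith)
      rw [h1]
      have h2 : min (‖x (t+1) i - x (t+1) j‖ ^ 2) (ε ^ 2) ≤ ε ^ 2 := min_le_right _ _
      exact sup_le (le_trans h2 (le_max_left _ _)) (le_trans hε2.le (le_max_left _ _))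
    · rw [if_neg hadj]
      exact sup_le (le_trans (min_le_right _ _) (le_max_right _ _)) (le_max_right _ _)
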